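/- Let P be an arbitrary probability distribution over R^d and let u_1, ..., u_{n+1} be i.i.d. random vectors drawn from P. Then the probability that u_{n+1} does not lie in the linear span of u_1, ..., u_n is at most d/(n+1). -/

import Mathlib

open MeasureTheory

section Aux

variable {d : ℕ}

local notation "E" => EuclideanSpace ℝ (Fin d)

lemma mem_span_iff_iInf_edist {m : ℕ} (w : Fin m → E) (v : E) :
    v ∈ Submodule.span ℝ (Set.range w) ↔
      (⨅ c : Fin m → ℚ, edist v (∑ i, (c i : ℝ) • w i)) = 0 := by
  set g : (Fin m → ℝ) → E := fun c => ∑ i, c i • w i with hg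
  have hgcont : Continuous g := by
    apply continuous_finset_sum
    intro i _
    exact (continuous_apply i).smul continuous_const
  set T : Set E := Set.range fun c : Fin m → ℚ => g fun i => (c i : ℝ) with hT
  have hclosure : closure T = (Submodule.span ℝ (Set.range w) : Set E) := by
    apply subset_antisymm
    · have hsub : T ⊆ (Submodule.span ℝ (Set.range w) : Set E) := by
        rintro _ ⟨c, rfl⟩
        exact Submodule.sum_mem _ fun i _ =>
          Submodule.smul_mem _ _ (Submodule.subset_span ⟨i, rfl⟩)
      exact closure_minimal hsub (Submodule.closed_of_finiteDimensional _)
    · intro v hv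
      obtain ⟨c, hc⟩ := (Submodule.mem_span_range_iff_exists_fun ℝ).1 hv
      set D : Set (Fin m → ℝ) := Set.univ.pi fun _ => Set.range ((↑) : ℚ → ℝ) with hD
      have hdense : Dense D := dense_pi Set.univ fun _ _ => Rat.denseRange_cast
      have hcD : c ∈ closure D := hdense c
      have h1 : g c ∈ closure (g '' D) :=
        image_closure_subset_closure_image hgcont ⟨c, hcD, rfl⟩
      have h2 : g '' D ⊆ T := by
        rintro _ ⟨x, hx, rfl⟩
        choose q hq using fun i => hx i (Set.mem_univ i)
        exact ⟨q, by simp only [hq]⟩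
      rw [← hc]
      exact closure_mono h2 h1
  have hinf : Metric.infEDist v T = ⨅ c : Fin m → ℚ, edist v (∑ i, (c i : ℝ) • w i) := by
    rw [hT]
    exact iInf_range
  rw [← hinf, ← EMetric.mem_closure_iff_infEdist_zero, hclosure, SetLike.mem_coe]

lemma card_le_of_not_mem_span {N : ℕ} (u : Fin N → E) (s : Finset (Fin N))
    (h : ∀ k ∈ s, u k ∉ Submodule.span ℝ (u '' {j | j ≠ k})) : s.card ≤ d := by
  classical
  have hli : LinearIndependent ℝ (fun k : s => u k) := by
    rw [linearIndependent_iff_notMem_span]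
    intro i hi
    apply h i i.2
    refine Submodule.span_mono ?_ hi
    rintro _ ⟨⟨k, hk⟩, ⟨-, hne⟩, rfl⟩
    exact ⟨k, fun hh => hne (Subtype.ext hh), rfl⟩
  have h1 := hli.fintype_card_le_finrank
  simpa [Fintype.card_coe, finrank_euclideanSpace_fin] using h1

end Aux

theorem stmt0 (d n : ℕ) (P : Measure (EuclideanSpace ℝ (Fin d)))
    [IsProbabilityMeasure P] :
    (Measure.pi fun _ : Fin (n + 1) => P)
      {u | u (Fin.last n) ∉
        Submodule.span ℝ (Set.range fun i : Fin n => u i.castSucc)}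
      ≤ (d : ENNReal) / (n + 1) := by
  classical
  set μ := Measure.pi fun _ : Fin (n + 1) => P with hμ
  set A : Fin (n + 1) → Set (Fin (n + 1) → EuclideanSpace ℝ (Fin d)) :=
    fun k => {u | u k ∉ Submodule.span ℝ (u '' {j | j ≠ k})} with hA
  have hrange : ∀ u : Fin (n + 1) → EuclideanSpace ℝ (Fin d),
      (Set.range fun i : Fin n => u i.castSucc) = u '' {j | j ≠ Fin.last n} := by
    intro u
    ext y
    constructor
    · rintro ⟨i, rfl⟩
      exact ⟨i.castSucc, (Fin.castSucc_lt_last i).ne, rfl⟩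
    · rintro ⟨j, hj, rfl⟩
      obtain ⟨i, rfl⟩ := Fin.exists_castSucc_eq.2 hj
      exact ⟨i, rfl⟩
  have htarget : {u : Fin (n + 1) → EuclideanSpace ℝ (Fin d) | u (Fin.last n) ∉
      Submodule.span ℝ (Set.range fun i : Fin n => u i.castSucc)} = A (Fin.last n) := by
    ext u
    simp only [hA, Set.mem_setOf_eq, hrange u]
  -- measurability of A (last)
  set f : (Fin (n + 1) → EuclideanSpace ℝ (Fin d)) → ENNReal := fun u =>
    ⨅ c : Fin n → ℚ, edist (u (Fin.last n)) (∑ i, (c i : ℝ) • u i.castSucc) with hf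
  have hfm : Measurable f := by
    refine Measurable.iInf fun c => Measurable.edist (measurable_pi_apply _) ?_
    exact Finset.measurable_sum _ fun i _ => by fun_prop
  have hAlast : A (Fin.last n) = (f ⁻¹' {0})ᶜ := by
    ext u
    simp only [hA, Set.mem_setOf_eq, ← hrange u, mem_span_iff_iInf_edist,
      Set.mem_compl_iff, Set.mem_preimage, Set.mem_singleton_iff, hf]
  have hmeaslast : MeasurableSet (A (Fin.last n)) := by
    rw [hAlast]
    exact (hfm (measurableSet_singleton 0)).compl
  -- exchangeability
  have hpre : ∀ k : Fin (n + 1),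
      (MeasurableEquiv.piCongrLeft (fun _ : Fin (n + 1) => EuclideanSpace ℝ (Fin d))
        (Equiv.swap k (Fin.last n))) ⁻¹' A (Fin.last n) = A k := by
    intro k
    set σ := Equiv.swap k (Fin.last n) with hσ
    have hcoe : ∀ (u : Fin (n + 1) → EuclideanSpace ℝ (Fin d)) (j : Fin (n + 1)),
        (MeasurableEquiv.piCongrLeft (fun _ : Fin (n + 1) => EuclideanSpace ℝ (Fin d)) σ) u j
          = u (σ.symm j) := by
      intro u j
      simp [MeasurableEquiv.piCongrLeft, Equiv.piCongrLeft_apply]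
    ext u
    have hfun : (MeasurableEquiv.piCongrLeft (fun _ : Fin (n + 1) => EuclideanSpace ℝ (Fin d)) σ) u
        = u ∘ σ.symm := funext fun j => hcoe u j
    simp only [Set.mem_preimage, hA, Set.mem_setOf_eq, hfun]
    have h1 : (u ∘ σ.symm) (Fin.last n) = u k := by
      simp [hσ, Equiv.symm_swap, Equiv.swap_apply_right]
    have h2 : (u ∘ σ.symm) '' {j | j ≠ Fin.last n} = u '' {j | j ≠ k} := by
      rw [Set.image_comp]
      congr 1
      have : {j : Fin (n + 1) | j ≠ Fin.last n} = ({Fin.last n}ᶜ : Set _) := rfl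
      rw [this, Set.image_compl_eq σ.symm.bijective]
      simp [hσ, Equiv.symm_swap, Equiv.swap_apply_right]
      rfl
    rw [h1, h2]
  have hmeask : ∀ k : Fin (n + 1), MeasurableSet (A k) := by
    intro k
    rw [← hpre k]
    exact (MeasurableEquiv.piCongrLeft _ _).measurable hmeaslast
  have hμk : ∀ k : Fin (n + 1), μ (A k) = μ (A (Fin.last n)) := by
    intro k
    rw [← hpre k]
    exact (measurePreserving_piCongrLeft (fun _ : Fin (n + 1) => P)
      (Equiv.swap k (Fin.last n))).measure_preimage hmeaslast.nullMeasurableSet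
  -- sum bound
  have hsum : ∑ k : Fin (n + 1), μ (A k) ≤ (d : ENNReal) := by
    have h2 : ∑ k : Fin (n + 1), μ (A k)
        = ∫⁻ u, ∑ k : Fin (n + 1), (A k).indicator (1 : (Fin (n + 1) → EuclideanSpace ℝ (Fin d)) → ENNReal) u ∂μ := by
      rw [lintegral_finset_sum _ fun k _ => measurable_one.indicator (hmeask k)]
      exact Finset.sum_congr rfl fun k _ => (lintegral_indicator_one (hmeask k)).symm
    have h3 : ∀ u : Fin (n + 1) → EuclideanSpace ℝ (Fin d),
        (∑ k : Fin (n + 1), (A k).indicator (1 : (Fin (n + 1) → EuclideanSpace ℝ (Fin d)) → ENNReal) u) ≤ (d : ENNReal) := by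
      intro u
      have heq : (∑ k : Fin (n + 1), (A k).indicator (1 : (Fin (n + 1) → EuclideanSpace ℝ (Fin d)) → ENNReal) u)
          = ((Finset.univ.filter fun k : Fin (n + 1) => u ∈ A k).card : ENNReal) := by
        rw [Finset.card_filter]
        push_cast
        refine Finset.sum_congr rfl fun k _ => ?_
        by_cases h : u ∈ A k <;> simp [Set.indicator_apply, h]
      rw [heq]
      have hcard : (Finset.univ.filter fun k : Fin (n + 1) => u ∈ A k).card ≤ d :=
        card_le_of_not_mem_span u _ fun k hk => (Finset.mem_filter.1 hk).2
      exact_mod_cast hcard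
    calc ∑ k : Fin (n + 1), μ (A k)
        = ∫⁻ u, ∑ k : Fin (n + 1), (A k).indicator (1 : (Fin (n + 1) → EuclideanSpace ℝ (Fin d)) → ENNReal) u ∂μ := h2
      _ ≤ ∫⁻ _, (d : ENNReal) ∂μ := lintegral_mono h3
      _ = (d : ENNReal) := by simp
  -- conclude
  have hmul : ((n : ENNReal) + 1) * μ (A (Fin.last n)) ≤ (d : ENNReal) := by
    calc ((n : ENNReal) + 1) * μ (A (Fin.last n))
        = ∑ _k : Fin (n + 1), μ (A (Fin.last n)) := by
          rw [Finset.sum_const, Finset.card_univ, Fintype.card_fin, nsmul_eq_mul]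
          push_cast
          ring
      _ = ∑ k : Fin (n + 1), μ (A k) := Finset.sum_congr rfl fun k _ => (hμk k).symm
      _ ≤ (d : ENNReal) := hsum
  have h0 : ((n : ENNReal) + 1) ≠ 0 := (lt_of_lt_of_le zero_lt_one le_add_self).ne'
  have htop : ((n : ENNReal) + 1) ≠ ⊤ :=
    ENNReal.add_ne_top.2 ⟨ENNReal.natCast_ne_top n, ENNReal.one_ne_top⟩
  rw [htarget, ENNReal.le_div_iff_mul_le (Or.inl h0) (Or.inl htop), mul_comm]
  exact hmul
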